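/- Sequential SVD gives an exact MPS: any tensor T ∈ ℝ^{w_1 × ⋯ × w_N} admits an exact MPS decomposition T_{σ_1…σ_N} = Σ_{a_1,…,a_{N-1}} A^{(1)}_{σ_1 a_1} A^{(2)}_{a_1 σ_2 a_2} ⋯ A^{(N)}_{a_{N-1} σ_N} with bond dimensions r_k = rank(T_k), where T_k is the k-th unfolding matrix. -/

import Mathlib

/-- The `k`-th unfolding matrix of an `N`-th order tensor `T` (all physical
dimensions equal to `p`). -/
def unfolding (N p : ℕ) (T : (Fin N → Fin p) → ℝ) (k : Fin (N + 1)) :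
    Matrix (Fin k.val → Fin p) (Fin (N - k.val) → Fin p) ℝ :=
  fun a b => T (fun i =>
    if h : i.val < k.val then a ⟨i.val, h⟩
    else b ⟨i.val - k.val, by have := i.isLt; omega⟩)

open Finset Module Submodule Matrix

noncomputable section Aux

variable (N p : ℕ) (T : (Fin N → Fin p) → ℝ)

def rowSp (k : Fin (N+1)) : Submodule ℝ ((Fin (N - k.val) → Fin p) → ℝ) :=
  Submodule.span ℝ (Set.range (unfolding N p T k))

lemma finrank_rowSp (k : Fin (N+1)) :
    finrank ℝ (rowSp N p T k) = (unfolding N p T k).rank := by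
  have h : rowSp N p T k = LinearMap.range (unfolding N p T k)ᵀ.mulVecLin := by
    rw [Matrix.range_mulVecLin, rowSp]
    rfl
  rw [h]
  exact Matrix.rank_transpose (unfolding N p T k)

def bas (k : Fin (N+1)) :
    Basis (Fin ((unfolding N p T k).rank)) ℝ (rowSp N p T k) :=
  (Module.finBasis ℝ _).reindex (finCongr (finrank_rowSp N p T k))

lemma row_mem (k : Fin (N+1)) (a : Fin k.val → Fin p) :
    unfolding N p T k a ∈ rowSp N p T k :=
  Submodule.subset_span (Set.mem_range_self a)

def rowv (k : Fin (N+1)) (a : Fin k.val → Fin p) : rowSp N p T k :=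
  ⟨unfolding N p T k a, row_mem N p T k a⟩

def coeff (k : Fin (N+1)) (a : Fin k.val → Fin p)
    (i : Fin ((unfolding N p T k).rank)) : ℝ :=
  (bas N p T k).repr (rowv N p T k a) i

def basv (k : Fin (N+1)) (i : Fin ((unfolding N p T k).rank)) :
    (Fin (N - k.val) → Fin p) → ℝ :=
  (bas N p T k i : rowSp N p T k)

lemma fac (k : Fin (N+1)) (a : Fin k.val → Fin p) (b : Fin (N - k.val) → Fin p) :
    unfolding N p T k a b
      = ∑ i, coeff N p T k a i * basv N p T k i b := by
  have h := (bas N p T k).sum_repr (rowv N p T k a)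
  have h2 : unfolding N p T k a b
      = ((rowv N p T k a : rowSp N p T k) : (Fin (N - k.val) → Fin p) → ℝ) b := rfl
  rw [h2, ← h]
  rw [Submodule.coe_sum]
  simp [coeff, basv, Finset.sum_apply]

def prer (k : Fin N) (σp : Fin p) (b : Fin (N - (k.val + 1)) → Fin p)
    (j : Fin (N - k.val)) : Fin p :=
  if h : j.val = 0 then σp
  else b ⟨j.val - 1, by have := j.isLt; have := k.isLt; omega⟩

def extr (k : Fin N) (a : Fin k.val → Fin p) (σp : Fin p) (i : Fin (k.val + 1)) :
    Fin p :=
  if h : i.val < k.val then a ⟨i.val, h⟩ else σp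

lemma glue (k : Fin N) (a : Fin k.val → Fin p) (σp : Fin p)
    (b : Fin (N - (k.val + 1)) → Fin p) :
    unfolding N p T k.succ (extr N p k a σp) b
      = unfolding N p T k.castSucc a (prer N p k σp b) := by
  show T _ = T _
  congr 1
  funext i
  simp only [Fin.val_succ, Fin.coe_castSucc, extr, prer]
  split_ifs <;>
    first
      | rfl
      | omega
      | (exact congrArg a (Fin.ext (by simp)))
      | (exact congrArg b (Fin.ext (by simp; omega)))
      | (simp_all; omega)

def shiftv (k : Fin N) (σp : Fin p)
    (f : (Fin (N - k.castSucc.val) → Fin p) → ℝ) :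
    (Fin (N - k.succ.val) → Fin p) → ℝ :=
  fun b => f (prer N p k σp b)

lemma shift_mem (k : Fin N) (σp : Fin p)
    {f : (Fin (N - k.castSucc.val) → Fin p) → ℝ}
    (hf : f ∈ rowSp N p T k.castSucc) :
    shiftv N p k σp f ∈ rowSp N p T k.succ := by
  have hle : rowSp N p T k.castSucc
      ≤ (rowSp N p T k.succ).comap (LinearMap.funLeft ℝ ℝ (prer N p k σp)) := by
    rw [rowSp, Submodule.span_le]
    rintro _ ⟨a, rfl⟩
    simp only [SetLike.mem_coe, Submodule.mem_comap]
    have : LinearMap.funLeft ℝ ℝ (prer N p k σp) (unfolding N p T k.castSucc a)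
        = unfolding N p T k.succ (extr N p k a σp) := by
      funext b
      exact (glue N p T k a σp b).symm
    rw [this]
    exact row_mem N p T k.succ (extr N p k a σp)
  exact hle hf

def core (k : Fin N) (i : Fin ((unfolding N p T k.castSucc).rank)) (σp : Fin p)
    (j : Fin ((unfolding N p T k.succ).rank)) : ℝ :=
  (bas N p T k.succ).repr
    ⟨shiftv N p k σp (basv N p T k.castSucc i),
      shift_mem N p T k σp (bas N p T k.castSucc i).2⟩ j

lemma core_rel (k : Fin N) (a : Fin k.val → Fin p) (σp : Fin p)
    (j : Fin ((unfolding N p T k.succ).rank)) :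
    coeff N p T k.succ (extr N p k a σp) j
      = ∑ i, coeff N p T k.castSucc a i * core N p T k i σp j := by
  set y : Fin ((unfolding N p T k.castSucc).rank) → rowSp N p T k.succ :=
    fun i => ⟨shiftv N p k σp (basv N p T k.castSucc i),
      shift_mem N p T k σp (bas N p T k.castSucc i).2⟩ with hy
  have hx : rowv N p T k.succ (extr N p k a σp)
      = ∑ i, coeff N p T k.castSucc a i • y i := by
    apply Subtype.ext
    rw [Submodule.coe_sum]
    funext b
    rw [Finset.sum_apply]
    have h1 : (rowv N p T k.succ (extr N p k a σp) :
        (Fin (N - k.succ.val) → Fin p) → ℝ) b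
        = unfolding N p T k.castSucc a (prer N p k σp b) := glue N p T k a σp b
    rw [h1, fac]
    refine Finset.sum_congr rfl fun i _ => ?_
    simp [y, shiftv, basv]
  have := congrArg (fun v => ((bas N p T k.succ).repr v) j) hx
  simp only [map_sum, _root_.map_smul, Finsupp.coe_finset_sum, Finset.sum_apply,
    Finsupp.smul_apply, smul_eq_mul] at this
  exact this

def w0 (i : Fin ((unfolding N p T ⟨0, Nat.succ_pos N⟩).rank)) : ℝ :=
  coeff N p T ⟨0, Nat.succ_pos N⟩ (fun x : Fin 0 => x.elim0) i

abbrev pathT (m : ℕ) (hm : m ≤ N) : Type :=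
  (j : Fin (m+1)) → Fin ((unfolding N p T ⟨j.val, by have := j.isLt; omega⟩).rank)

def Psum (m : ℕ) (hm : m ≤ N) (σ : Fin N → Fin p)
    (i : Fin ((unfolding N p T ⟨m, by omega⟩).rank)) : ℝ :=
  ∑ a : pathT N p T m hm,
    if a (Fin.last m) = i then
      w0 N p T (a ⟨0, Nat.succ_pos m⟩) *
        ∏ k : Fin m, core N p T ⟨k.val, by have := k.isLt; omega⟩
          (a k.castSucc) (σ ⟨k.val, by have := k.isLt; omega⟩) (a k.succ)
    else 0

lemma coeff_congr (k : Fin (N+1)) {a b : Fin k.val → Fin p} (h : a = b)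
    (i : Fin ((unfolding N p T k).rank)) : coeff N p T k a i = coeff N p T k b i := by
  rw [h]

lemma main : ∀ (m : ℕ) (hm : m ≤ N) (σ : Fin N → Fin p)
    (i : Fin ((unfolding N p T ⟨m, by omega⟩).rank)),
    coeff N p T ⟨m, by omega⟩ (fun j : Fin m => σ ⟨j.val, by have := j.isLt; omega⟩) i
      = Psum N p T m hm σ i := by
  intro m
  induction m with
  | zero =>
    intro hm σ i
    set a0 : pathT N p T 0 hm := fun j =>
      Fin.cast (by
        have hj : (⟨0, Nat.succ_pos N⟩ : Fin (N+1))
            = (⟨j.val, by have := j.isLt; omega⟩ : Fin (N+1)) := by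
          apply Fin.ext
          show (0:ℕ) = j.val
          have := j.isLt; omega
        rw [hj]) i
      with ha0
    have ha0last : a0 (Fin.last 0) = i := Fin.ext rfl
    have ha0z : a0 ⟨0, Nat.succ_pos 0⟩ = i := Fin.ext rfl
    rw [Psum, Finset.sum_eq_single a0]
    · rw [if_pos ha0last, ha0z]
      simp only [Finset.univ_eq_empty, Finset.prod_empty, mul_one]
      exact coeff_congr N p T _ (funext fun x => x.elim0) i
    · intro a _ hne
      rw [if_neg]
      intro hlast
      apply hne
      funext j
      have hj : j = Fin.last 0 := by
        apply Fin.ext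
        have := j.isLt
        simp only [Fin.val_last]
        omega
      rw [hj, hlast]
      exact ha0last.symm
    · intro h
      exact absurd (Finset.mem_univ a0) h
  | succ m ih =>
    intro hm σ i
    have hm' : m ≤ N := by omega
    have h1 := core_rel N p T ⟨m, by omega⟩
      (fun j : Fin m => σ ⟨j.val, by have := j.isLt; omega⟩) (σ ⟨m, by omega⟩) i
    have hrow : extr N p ⟨m, by omega⟩
        (fun j : Fin m => σ ⟨j.val, by have := j.isLt; omega⟩) (σ ⟨m, by omega⟩)
        = fun j : Fin (m+1) => σ ⟨j.val, by have := j.isLt; omega⟩ := by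
      funext j
      rw [extr]
      split_ifs with h
      · rfl
      · refine congrArg σ (Fin.ext ?_)
        have h2 : ¬ j.val < m := h
        have h3 : (j:ℕ) < m + 1 := j.isLt
        show (m:ℕ) = j.val
        omega
    rw [hrow] at h1
    have hih : ∀ i', coeff N p T (⟨m, by omega⟩ : Fin N).castSucc
        (fun j : Fin m => σ ⟨j.val, by have := j.isLt; omega⟩) i'
        = Psum N p T m hm' σ i' := fun i' => ih hm' σ i'
    simp only [hih] at h1
    refine h1.trans ?_
    -- ⊢ ∑ i', Psum m hm' σ i' * core ⟨m,_⟩ i' (σ ⟨m,_⟩) i = Psum (m+1) hm σ i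
    have lhs_eq : (∑ i', Psum N p T m hm' σ i'
          * core N p T ⟨m, by omega⟩ i' (σ ⟨m, by omega⟩) i)
        = ∑ a : pathT N p T m hm',
            w0 N p T (a ⟨0, Nat.succ_pos m⟩)
            * (∏ k : Fin m, core N p T ⟨k.val, by have := k.isLt; omega⟩
                (a k.castSucc) (σ ⟨k.val, by have := k.isLt; omega⟩) (a k.succ))
            * core N p T ⟨m, by omega⟩ (a (Fin.last m)) (σ ⟨m, by omega⟩) i := by
      simp only [Psum, Finset.sum_mul, ite_mul, zero_mul]
      rw [Finset.sum_comm]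
      refine Finset.sum_congr rfl fun a _ => ?_
      rw [Finset.sum_ite_eq]
      simp
    refine lhs_eq.trans ?_
    rw [Psum]
    rw [← Equiv.sum_comp (Fin.snocEquiv
      (fun j : Fin (m+2) => Fin ((unfolding N p T ⟨j.val, by have := j.isLt; omega⟩).rank)))]
    rw [Fintype.sum_prod_type]
    simp only [Fin.snocEquiv_apply]
    rw [Finset.sum_comm]
    refine Fintype.sum_bijective (fun a => a) ⟨fun _ _ h => h, fun b => ⟨b, rfl⟩⟩ _ _
      (fun a => ?_)
    have hz : ∀ (x : Fin ((unfolding N p T ⟨m+1, by omega⟩).rank)),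
        Fin.snoc (α := fun j : Fin (m+2) =>
            Fin ((unfolding N p T ⟨j.val, by have := j.isLt; omega⟩).rank))
          a x ⟨0, Nat.succ_pos (m+1)⟩ = a ⟨0, Nat.succ_pos m⟩ :=
      by
        intro x
        exact Fin.snoc_castSucc
          (α := fun j : Fin (m+2) =>
            Fin ((unfolding N p T ⟨j.val, by have := j.isLt; omega⟩).rank))
          (p := a) (x := x) (i := ⟨0, Nat.succ_pos m⟩)
    simp only [Fin.snoc_last, hz, Fin.prod_univ_castSucc, Fin.snoc_castSucc,
      Fin.succ_castSucc, Fin.succ_last, Fin.coe_castSucc, Fin.val_last]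
    rw [Finset.sum_ite_eq']
    simp only [Finset.mem_univ, if_true]
    ring


def evec (j : Fin ((unfolding N p T (Fin.last N)).rank)) : ℝ :=
  basv N p T (Fin.last N) j (fun x => absurd x.isLt (by simp only [Fin.val_last]; omega))

lemma acast (a : (k : Fin (N+1)) → Fin ((unfolding N p T k).rank))
    {x y : Fin (N+1)} (h : x = y)
    (hr : (unfolding N p T x).rank = (unfolding N p T y).rank) :
    Fin.cast hr (a x) = a y := by
  subst h
  exact Fin.ext rfl

def Acore (k : Fin N) (i : Fin ((unfolding N p T k.castSucc).rank)) (σp : Fin p)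
    (j : Fin ((unfolding N p T k.succ).rank)) : ℝ :=
  (if h : k.val = 0 then
      w0 N p T (Fin.cast (by rw [show k.castSucc = ⟨0, Nat.succ_pos N⟩ from Fin.ext h]) i)
    else 1)
  * core N p T k i σp j
  * (if h : k.val + 1 = N then
      evec N p T (Fin.cast (by rw [show k.succ = Fin.last N from Fin.ext h]) j)
    else 1)

lemma prod_Acore (hN : 1 ≤ N) (σ : Fin N → Fin p)
    (a : (k : Fin (N+1)) → Fin ((unfolding N p T k).rank)) :
    (∏ k : Fin N, Acore N p T k (a k.castSucc) (σ k) (a k.succ))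
      = w0 N p T (a ⟨0, Nat.succ_pos N⟩)
        * (∏ k : Fin N, core N p T k (a k.castSucc) (σ k) (a k.succ))
        * evec N p T (a (Fin.last N)) := by
  simp only [Acore]
  rw [Finset.prod_mul_distrib, Finset.prod_mul_distrib]
  congr 1
  · congr 1
    rw [Finset.prod_eq_single (⟨0, by omega⟩ : Fin N)]
    · rw [dif_pos rfl]
      exact congrArg (w0 N p T) (acast N p T a (Fin.ext rfl) _)
    · intro b _ hb
      rw [dif_neg (fun hb0 => hb (Fin.ext hb0))]
    · intro h
      exact absurd (Finset.mem_univ _) h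
  · rw [Finset.prod_eq_single (⟨N-1, by omega⟩ : Fin N)]
    · rw [dif_pos (show N-1+1 = N by omega)]
      refine congrArg (evec N p T) (acast N p T a (Fin.ext (show N-1+1 = N by omega)) _)
    · intro b _ hb
      rw [dif_neg (fun hb0 => hb (Fin.ext (show (b:ℕ) = N-1 by omega)))]
    · intro h
      exact absurd (Finset.mem_univ _) h

end Aux

/-- sequential SVD gives an exact MPS: every tensor
`T ∈ ℝ^{p × ⋯ × p}` admits an exact MPS decomposition whose bond dimension at
the cut after site `k` equals the rank `r_k` of the `k`-th unfolding matrix: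
there are cores `A k : r_k × p × r_{k+1}` (boundary bonds are the ranks of the
trivial unfoldings) with
`T σ = Σ_{a} A⁽¹⁾_{a₀ σ₁ a₁} A⁽²⁾_{a₁ σ₂ a₂} ⋯ A⁽ᴺ⁾_{a_{N-1} σ_N a_N}`. -/
theorem sequential_svd_exact_mps (N p : ℕ) (hN : 1 ≤ N) (T : (Fin N → Fin p) → ℝ) :
    ∃ A : (k : Fin N) →
        Fin ((unfolding N p T k.castSucc).rank) → Fin p →
          Fin ((unfolding N p T k.succ).rank) → ℝ,
      ∀ σ : Fin N → Fin p,
        T σ = ∑ a : (k : Fin (N + 1)) → Fin ((unfolding N p T k).rank),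
          ∏ k : Fin N, A k (a k.castSucc) (σ k) (a k.succ) := by
  refine ⟨Acore N p T, fun σ => ?_⟩
  have hT : T σ = unfolding N p T (Fin.last N) σ
      (fun x => absurd x.isLt (by simp only [Fin.val_last]; omega)) := by
    show T σ = T _
    congr 1
    funext i
    rw [dif_pos (show (i:ℕ) < ((Fin.last N : Fin (N+1)) : ℕ) from i.isLt)]
    rfl
  have hc : ∀ i, coeff N p T (Fin.last N) σ i = Psum N p T N (le_refl N) σ i :=
    fun i => main N p T N (le_refl N) σ i
  calc T σ = ∑ i, coeff N p T (Fin.last N) σ i * evec N p T i := by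
        rw [hT, fac N p T (Fin.last N) σ]
        rfl
      _ = ∑ i, Psum N p T N (le_refl N) σ i * evec N p T i := by
        exact Finset.sum_congr rfl fun i _ => by rw [hc i]
      _ = ∑ a : pathT N p T N (le_refl N),
            w0 N p T (a ⟨0, Nat.succ_pos N⟩)
            * (∏ k : Fin N, core N p T ⟨k.val, k.isLt⟩
                (a k.castSucc) (σ ⟨k.val, k.isLt⟩) (a k.succ))
            * evec N p T (a (Fin.last N)) := by
        simp only [Psum, Finset.sum_mul, ite_mul, zero_mul]
        rw [Finset.sum_comm]
        refine Finset.sum_congr rfl fun a _ => ?_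
        rw [Finset.sum_ite_eq]
        simp [mul_assoc]
      _ = ∑ a : (k : Fin (N + 1)) → Fin ((unfolding N p T k).rank),
          ∏ k : Fin N, Acore N p T k (a k.castSucc) (σ k) (a k.succ) := by
        refine Fintype.sum_bijective (fun a => a) ⟨fun _ _ h => h, fun b => ⟨b, rfl⟩⟩ _ _
          (fun a => ?_)
        rw [prod_Acore N p T hN σ a]
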